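/- Let A : ℝ → gl_n(ℝ) be a differentiable curve of matrices satisfying A' = -tr(S(A)²)·A + (1/2)[A,[A,Aᵗ]] - (1/2)tr(A)·[A,Aᵗ], where S(A) = (A+Aᵗ)/2. Then (d/dt)‖A(t)‖² = -2·tr(S(A)²)·‖A‖² - ‖[A,Aᵗ]‖² ≤ 0, so t ↦ ‖A(t)‖ is non-increasing. -/

import Mathlib

open Matrix Filter

noncomputable section

abbrev Mat (n : ℕ) := Matrix (Fin n) (Fin n) ℝ

/-- Commutator bracket of matrices. -/
def bkt {n : ℕ} (X Y : Mat n) : Mat n := X * Y - Y * X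

/-- Frobenius inner product ⟨X,Y⟩ = tr(XYᵗ). -/
def frob {n : ℕ} (X Y : Mat n) : ℝ := Matrix.trace (X * Yᵀ)

/-- Squared Frobenius norm ‖X‖² = tr(XXᵗ). -/
def sqnorm {n : ℕ} (X : Mat n) : ℝ := frob X X

/-- Symmetric part S(X) = (X+Xᵗ)/2. -/
def symPart {n : ℕ} (X : Mat n) : Mat n := (1/2 : ℝ) • (X + Xᵀ)

/-- Right-hand side of the bracket flow ODE. -/
def rhs {n : ℕ} (A : Mat n) : Mat n :=
  (-(Matrix.trace (symPart A * symPart A))) • A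
    + (1/2 : ℝ) • bkt A (bkt A Aᵀ)
    - ((1/2 : ℝ) * Matrix.trace A) • bkt A Aᵀ

lemma tr4 {n : ℕ} (a b c d : Mat n) : Matrix.trace (a*b*c*d) = Matrix.trace (d*a*b*c) := by
  rw [Matrix.trace_mul_comm]; simp only [← mul_assoc]

lemma frob_sum {n : ℕ} (X Y : Mat n) : frob X Y = ∑ i, ∑ j, X i j * Y i j := by
  simp [frob, Matrix.trace, Matrix.diag, Matrix.mul_apply, Matrix.transpose_apply]

lemma sqnorm_nonneg {n : ℕ} (X : Mat n) : 0 ≤ sqnorm X := by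
  rw [sqnorm, frob_sum]
  exact Finset.sum_nonneg fun i _ => Finset.sum_nonneg fun j _ => mul_self_nonneg _

lemma symPart_transpose {n : ℕ} (X : Mat n) : (symPart X)ᵀ = symPart X := by
  simp [symPart, transpose_add, add_comm]

lemma trace_symPart_sq_nonneg {n : ℕ} (X : Mat n) :
    0 ≤ Matrix.trace (symPart X * symPart X) := by
  have := sqnorm_nonneg (symPart X)
  rwa [sqnorm, frob, symPart_transpose] at this

lemma key {n : ℕ} (M : Mat n) :
    2 * frob M (rhs M)
      = -2 * Matrix.trace (symPart M * symPart M) * sqnorm M - sqnorm (bkt M Mᵀ) := by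
  have hC : (M*Mᵀ - Mᵀ*M)ᵀ = M*Mᵀ - Mᵀ*M := by
    simp [transpose_sub]
  have h0 : Matrix.trace (M * (M*Mᵀ - Mᵀ*M)) = 0 := by
    simp only [Matrix.mul_sub, trace_sub]
    rw [Matrix.trace_mul_comm M (M*Mᵀ), mul_assoc]; ring
  have h1 : Matrix.trace (M * ((M*Mᵀ - Mᵀ*M)*Mᵀ - Mᵀ*(M*Mᵀ - Mᵀ*M)))
      = -Matrix.trace ((M*Mᵀ - Mᵀ*M) * (M*Mᵀ - Mᵀ*M)) := by
    simp only [Matrix.mul_sub, Matrix.sub_mul, trace_sub, ← mul_assoc]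
    rw [tr4 M Mᵀ Mᵀ M, ← tr4 M M Mᵀ Mᵀ, ← tr4 M Mᵀ M Mᵀ]
    ring
  have hrt : (rhs M)ᵀ = (-(Matrix.trace (symPart M * symPart M))) • Mᵀ
      + (1/2 : ℝ) • ((M*Mᵀ - Mᵀ*M)*Mᵀ - Mᵀ*(M*Mᵀ - Mᵀ*M))
      - ((1/2 : ℝ) * Matrix.trace M) • (M*Mᵀ - Mᵀ*M) := by
    simp only [rhs, bkt, transpose_sub, transpose_add, transpose_smul, transpose_mul,
      transpose_transpose]
  rw [frob, hrt]
  simp only [Matrix.mul_add, Matrix.mul_sub, Matrix.mul_smul, trace_add, trace_sub,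
    trace_smul, smul_eq_mul]
  simp only [Matrix.mul_sub, trace_sub] at h0 h1
  rw [show sqnorm (bkt M Mᵀ) = Matrix.trace ((M*Mᵀ - Mᵀ*M) * (M*Mᵀ - Mᵀ*M)) by
    rw [sqnorm, frob, bkt, hC]]
  rw [sqnorm, frob]
  have h2 : Matrix.trace ((M*Mᵀ - Mᵀ*M) * (M*Mᵀ - Mᵀ*M))
      = Matrix.trace ((M*Mᵀ - Mᵀ*M) * (M*Mᵀ)) - Matrix.trace ((M*Mᵀ - Mᵀ*M) * (Mᵀ*M)) := by
    simp [Matrix.mul_sub]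
  linear_combination h1 - Matrix.trace M * h0 + h2

theorem stmt7 {n : ℕ} (A : ℝ → Mat n)
    (hA : ∀ t : ℝ, ∀ i j, HasDerivAt (fun s => A s i j) (rhs (A t) i j) t) :
    (∀ t : ℝ, HasDerivAt (fun s => sqnorm (A s))
      (-2 * Matrix.trace (symPart (A t) * symPart (A t)) * sqnorm (A t)
        - sqnorm (bkt (A t) (A t)ᵀ)) t) ∧
    (∀ t : ℝ, -2 * Matrix.trace (symPart (A t) * symPart (A t)) * sqnorm (A t)
        - sqnorm (bkt (A t) (A t)ᵀ) ≤ 0) ∧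
    Antitone (fun t => Real.sqrt (sqnorm (A t))) := by
  have hd : ∀ t : ℝ, HasDerivAt (fun s => sqnorm (A s))
      (-2 * Matrix.trace (symPart (A t) * symPart (A t)) * sqnorm (A t)
        - sqnorm (bkt (A t) (A t)ᵀ)) t := by
    intro t
    have h : HasDerivAt (fun s => ∑ i, ∑ j, A s i j * A s i j)
        (∑ i, ∑ j, (rhs (A t) i j * A t i j + A t i j * rhs (A t) i j)) t :=
      HasDerivAt.fun_sum fun i _ => HasDerivAt.fun_sum fun j _ => (hA t i j).mul (hA t i j)
    have hfun : (fun s => sqnorm (A s)) = fun s => ∑ i, ∑ j, A s i j * A s i j := by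
      funext s; rw [sqnorm, frob_sum]
    rw [hfun]
    convert h using 1
    have : (∑ i, ∑ j, (rhs (A t) i j * A t i j + A t i j * rhs (A t) i j))
        = 2 * frob (A t) (rhs (A t)) := by
      rw [frob_sum, Finset.mul_sum]
      congr 1; funext i
      rw [Finset.mul_sum]
      congr 1; funext j
      ring
    rw [this, key]
  have hle : ∀ t : ℝ, -2 * Matrix.trace (symPart (A t) * symPart (A t)) * sqnorm (A t)
      - sqnorm (bkt (A t) (A t)ᵀ) ≤ 0 := by
    intro t
    have h1 := mul_nonneg (trace_symPart_sq_nonneg (A t)) (sqnorm_nonneg (A t))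
    have h2 := sqnorm_nonneg (bkt (A t) (A t)ᵀ)
    nlinarith
  refine ⟨hd, hle, ?_⟩
  have hmono : Antitone (fun t => sqnorm (A t)) := by
    apply antitone_of_deriv_nonpos
    · exact fun t => (hd t).differentiableAt
    · intro t
      rw [(hd t).deriv]
      exact hle t
  exact fun a b hab => Real.sqrt_le_sqrt (hmono hab)
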